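/- arXiv:1904.06922 — 7 statements merged into one kernel-verified Lean document; each statement's English description precedes it below -/
import Mathlib

section
/- Fix a finite set P of points with a linking number function J on ordered pairs. On the commutative polynomial ring Z(P) = K[xy : x,y ∈ P]/(xx = 0 for x ∈ P), the swapping bracket defined on generators by {rx, sy} = J(rx,sy)·(ry·sx) and extended by the Leibniz rule is a well-defined biderivation that is antisymmetric: {A, B} = −{B, A} for all A, B. -/
/-- The sign function, valued in ℚ. -/
noncomputable def sgnq (a : ℝ) : ℚ := if a < 0 then -1 else if a = 0 then 0 else 1

/-- The linking number J(rx, sy), valued in ℚ. -/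
noncomputable def Jlink (r x s y : ℝ) : ℚ :=
  (1/2) * sgnq (r-x) * sgnq (r-y) * sgnq (y-x) - (1/2) * sgnq (r-x) * sgnq (r-s) * sgnq (s-x)

/-- The swapping ring Z(P) = K[xy : x,y ∈ P]/(xx = 0): the polynomial ring over K in
variables indexed by ordered pairs of distinct points of P. -/
abbrev SwapRing (K : Type) [Field K] (ι : Type) : Type :=
  MvPolynomial {p : ι × ι // p.1 ≠ p.2} K

open scoped Classical in
/-- The generator xy ∈ Z(P) (zero when x = y). -/
noncomputable def gen {K : Type} [Field K] {ι : Type} (x y : ι) : SwapRing K ι :=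
  if h : x = y then 0 else MvPolynomial.X ⟨(x, y), h⟩

lemma sgnq_sub_of_lt {a b : ℝ} (h : a < b) : sgnq (a - b) = -1 := by
  simp [sgnq, sub_neg.mpr h]

lemma sgnq_sub_of_gt {a b : ℝ} (h : b < a) : sgnq (a - b) = 1 := by
  have h1 : ¬ (a - b < 0) := by linarith
  have h2 : a - b ≠ 0 := by intro h'; linarith [sub_eq_zero.mp h']
  simp [sgnq, h1, h2]

lemma sgnq_sub_of_eq {a b : ℝ} (h : a = b) : sgnq (a - b) = 0 := by
  simp [sgnq, h]

lemma sgnq_sub_swap (a b : ℝ) : sgnq (b - a) = - sgnq (a - b) := by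
  rcases lt_trichotomy a b with h|h|h
  · rw [sgnq_sub_of_lt h, sgnq_sub_of_gt h]; norm_num
  · simp [sgnq_sub_of_eq h, sgnq_sub_of_eq h.symm]
  · rw [sgnq_sub_of_gt h, sgnq_sub_of_lt h]; try norm_num

set_option maxHeartbeats 1000000 in
lemma Jlink_antisymm' {r x s y : ℝ} (hrx : r ≠ x) (hsy : s ≠ y) (hry : r ≠ y)
    (hsx : s ≠ x) : Jlink r x s y = - Jlink s y r x := by
  by_cases hrs : r = s
  · subst hrs
    unfold Jlink
    rw [sgnq_sub_of_eq (rfl : r = r), sgnq_sub_swap x y, sgnq_sub_swap x r,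
      sgnq_sub_swap y r]
    ring
  by_cases hxy : x = y
  · subst hxy
    unfold Jlink
    rw [sgnq_sub_of_eq (rfl : x = x), sgnq_sub_swap r s]
    ring
  unfold Jlink
  rcases hrx.lt_or_gt with h1|h1 <;>
  rcases hry.lt_or_gt with h2|h2 <;>
  rcases (Ne.lt_or_gt hrs) with h3|h3 <;>
  rcases hsx.lt_or_gt with h4|h4 <;>
  rcases hsy.lt_or_gt with h5|h5 <;>
  rcases (Ne.lt_or_gt hxy) with h6|h6 <;>
  first
  | linarith
  | (simp only [sgnq_sub_of_lt h1, sgnq_sub_of_gt h1,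
      sgnq_sub_of_lt h2, sgnq_sub_of_gt h2,
      sgnq_sub_of_lt h3, sgnq_sub_of_gt h3,
      sgnq_sub_of_lt h4, sgnq_sub_of_gt h4,
      sgnq_sub_of_lt h5, sgnq_sub_of_gt h5,
      sgnq_sub_of_lt h6, sgnq_sub_of_gt h6]; norm_num)

lemma Jlink_xx (r s y : ℝ) : Jlink r r s y = 0 := by
  simp [Jlink, sgnq]

lemma Jlink_ss (r x s : ℝ) : Jlink r x s s = 0 := by
  unfold Jlink; ring

section Construction

variable (K : Type) [Field K] [CharZero K] (ι : Type) (pos : ι → ℝ)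

/-- The value of the bracket on a pair of generators. -/
noncomputable def Efam (v w : {p : ι × ι // p.1 ≠ p.2}) : SwapRing K ι :=
  Jlink (pos v.1.1) (pos v.1.2) (pos w.1.1) (pos w.1.2) •
    (gen v.1.1 w.1.2 * gen w.1.1 v.1.2)

/-- The derivation {X v, -}. -/
noncomputable def Dv (v : {p : ι × ι // p.1 ≠ p.2}) :
    Derivation K (SwapRing K ι) (SwapRing K ι) :=
  MvPolynomial.mkDerivation K (Efam K ι pos v)

/-- The swapping bracket. -/
noncomputable def Bb (p q : SwapRing K ι) : SwapRing K ι :=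
  MvPolynomial.mkDerivation K (fun v => Dv K ι pos v q) p

variable {K ι}

lemma Bb_add_left (p p' q : SwapRing K ι) :
    Bb K ι pos (p + p') q = Bb K ι pos p q + Bb K ι pos p' q := by
  unfold Bb; exact map_add _ _ _

lemma Bb_smul_left (k : K) (p q : SwapRing K ι) :
    Bb K ι pos (k • p) q = k • Bb K ι pos p q := by
  unfold Bb; exact Derivation.map_smul _ _ _

lemma Bb_mul_left (p p' q : SwapRing K ι) :
    Bb K ι pos (p * p') q = p * Bb K ι pos p' q + Bb K ι pos p q * p' := by
  unfold Bb
  rw [Derivation.leibniz]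
  simp only [smul_eq_mul]
  ring

lemma Bb_C_left (k : K) (q : SwapRing K ι) : Bb K ι pos (MvPolynomial.C k) q = 0 := by
  unfold Bb; exact MvPolynomial.derivation_C _ _

lemma Bb_add_right (p q q' : SwapRing K ι) :
    Bb K ι pos p (q + q') = Bb K ι pos p q + Bb K ι pos p q' := by
  have h : (MvPolynomial.mkDerivation K fun v => Dv K ι pos v (q + q')) =
      (MvPolynomial.mkDerivation K fun v => Dv K ι pos v q)
        + (MvPolynomial.mkDerivation K fun v => Dv K ι pos v q') := by
    apply MvPolynomial.derivation_ext
    intro i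
    simp [MvPolynomial.mkDerivation_X]
  unfold Bb
  rw [h]
  rfl

lemma Bb_smul_right (k : K) (p q : SwapRing K ι) :
    Bb K ι pos p (k • q) = k • Bb K ι pos p q := by
  have h : (MvPolynomial.mkDerivation K fun v => Dv K ι pos v (k • q)) =
      k • (MvPolynomial.mkDerivation K fun v => Dv K ι pos v q) := by
    apply MvPolynomial.derivation_ext
    intro i
    simp [MvPolynomial.mkDerivation_X]
  unfold Bb
  rw [h]
  rfl

lemma Bb_mul_right (p q q' : SwapRing K ι) :
    Bb K ι pos p (q * q') = q * Bb K ι pos p q' + Bb K ι pos p q * q' := by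
  have h : (MvPolynomial.mkDerivation K fun v => Dv K ι pos v (q * q')) =
      q • (MvPolynomial.mkDerivation K fun v => Dv K ι pos v q')
        + q' • (MvPolynomial.mkDerivation K fun v => Dv K ι pos v q) := by
    apply MvPolynomial.derivation_ext
    intro i
    simp only [MvPolynomial.mkDerivation_X, Derivation.leibniz, Derivation.add_apply,
      Derivation.smul_apply, smul_eq_mul]
  unfold Bb
  rw [h]
  simp only [Derivation.add_apply, Derivation.smul_apply, smul_eq_mul]
  ring

lemma Bb_C_right (k : K) (q : SwapRing K ι) : Bb K ι pos q (MvPolynomial.C k) = 0 := by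
  have h : (MvPolynomial.mkDerivation K fun v => Dv K ι pos v (MvPolynomial.C k)) =
      (0 : Derivation K (SwapRing K ι) (SwapRing K ι)) := by
    apply MvPolynomial.derivation_ext
    intro i
    simp [MvPolynomial.mkDerivation_X]
  unfold Bb
  rw [h]
  rfl

lemma Bb_X_X (v w : {p : ι × ι // p.1 ≠ p.2}) :
    Bb K ι pos (MvPolynomial.X v) (MvPolynomial.X w) = Efam K ι pos v w := by
  unfold Bb
  rw [MvPolynomial.mkDerivation_X]
  unfold Dv
  rw [MvPolynomial.mkDerivation_X]

lemma Bb_gen (hpos : Function.Injective pos) (r x s y : ι) :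
    Bb K ι pos (gen r x) (gen s y)
      = Jlink (pos r) (pos x) (pos s) (pos y) • (gen r y * gen s x) := by
  classical
  by_cases hrx : r = x
  · subst hrx
    rw [show (gen r r : SwapRing K ι) = 0 from dif_pos rfl, Jlink_xx, zero_smul]
    show Bb K ι pos (0 : SwapRing K ι) _ = 0
    unfold Bb; exact map_zero _
  by_cases hsy : s = y
  · subst hsy
    rw [show (gen s s : SwapRing K ι) = 0 from dif_pos rfl, Jlink_ss, zero_smul]
    have h0 : (0 : SwapRing K ι) = (0 : K) • (0 : SwapRing K ι) := by simp
    rw [h0, Bb_smul_right]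
    simp
  · rw [show (gen r x : SwapRing K ι) = MvPolynomial.X ⟨(r, x), hrx⟩ from dif_neg hrx,
      show (gen s y : SwapRing K ι) = MvPolynomial.X ⟨(s, y), hsy⟩ from dif_neg hsy,
      Bb_X_X]
    rfl

lemma Efam_antisymm (hpos : Function.Injective pos) (v w : {p : ι × ι // p.1 ≠ p.2}) :
    Efam K ι pos v w = - Efam K ι pos w v := by
  classical
  unfold Efam
  by_cases h1 : v.1.1 = w.1.2
  · rw [show (gen v.1.1 w.1.2 : SwapRing K ι) = 0 from dif_pos h1]
    simp
  by_cases h2 : w.1.1 = v.1.2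
  · rw [show (gen w.1.1 v.1.2 : SwapRing K ι) = 0 from dif_pos h2]
    simp
  · have hJ : Jlink (pos v.1.1) (pos v.1.2) (pos w.1.1) (pos w.1.2)
        = - Jlink (pos w.1.1) (pos w.1.2) (pos v.1.1) (pos v.1.2) := by
      apply Jlink_antisymm' (fun h => v.2 (hpos h)) (fun h => w.2 (hpos h))
        (fun h => h1 (hpos h)) (fun h => h2 (hpos h))
    rw [hJ, neg_smul, neg_inj, mul_comm]

lemma Bb_antisymm (hpos : Function.Injective pos) (A C : SwapRing K ι) :
    Bb K ι pos A C = - Bb K ι pos C A := by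
  have key : ∀ v w, Bb K ι pos (MvPolynomial.X v) (MvPolynomial.X w)
      + Bb K ι pos (MvPolynomial.X w) (MvPolynomial.X v) = 0 := by
    intro v w
    rw [Bb_X_X, Bb_X_X, Efam_antisymm pos hpos v w]
    ring
  have claim1 : ∀ (v : {p : ι × ι // p.1 ≠ p.2}) (C : SwapRing K ι),
      Bb K ι pos (MvPolynomial.X v) C + Bb K ι pos C (MvPolynomial.X v) = 0 := by
    intro v C
    induction C using MvPolynomial.induction_on with
    | C a => rw [Bb_C_right, Bb_C_left]; ring
    | add p q hp hq =>
      rw [Bb_add_right, Bb_add_left]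
      linear_combination hp + hq
    | mul_X p w hp =>
      rw [Bb_mul_right, Bb_mul_left]
      linear_combination p * key v w + MvPolynomial.X w * hp
  have main : Bb K ι pos A C + Bb K ι pos C A = 0 := by
    induction A using MvPolynomial.induction_on with
    | C a => rw [Bb_C_left, Bb_C_right]; ring
    | add p q hp hq =>
      rw [Bb_add_right, Bb_add_left]
      linear_combination hp + hq
    | mul_X p w hp =>
      rw [Bb_mul_right, Bb_mul_left]
      linear_combination p * claim1 w C + MvPolynomial.X w * hp
  linear_combination main

end Construction

/-- On Z(P), the swapping bracket, defined on generators by {rx, sy} = J(rx,sy)·ry·sx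
and extended by the Leibniz rule, is a well-defined biderivation that is antisymmetric. -/
theorem swapping_bracket_exists_antisymm (K : Type) [Field K] [CharZero K]
    (ι : Type) [Fintype ι] (pos : ι → ℝ) (hpos : Function.Injective pos) :
    ∃ B : SwapRing K ι → SwapRing K ι → SwapRing K ι,
      (∀ x y z, B (x + y) z = B x z + B y z) ∧
      (∀ x y z, B x (y + z) = B x y + B x z) ∧
      (∀ (k : K) x z, B (k • x) z = k • B x z) ∧
      (∀ (k : K) x z, B x (k • z) = k • B x z) ∧
      (∀ x y z, B (x * y) z = x * B y z + B x z * y) ∧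
      (∀ x y z, B x (y * z) = y * B x z + B x y * z) ∧
      (∀ r x s y : ι, B (gen r x) (gen s y)
          = Jlink (pos r) (pos x) (pos s) (pos y) • (gen r y * gen s x)) ∧
      (∀ A C, B A C = - B C A) :=
  ⟨Bb K ι pos, Bb_add_left pos, Bb_add_right pos, Bb_smul_left pos, Bb_smul_right pos,
    Bb_mul_left pos, Bb_mul_right pos, Bb_gen pos hpos, Bb_antisymm pos hpos⟩
end

section
/- For any generator ab of Z(P) and any cross fraction (xz/xt)·(yt/yz) in the fraction field Q(P), the (0,1)-swapping bracket vanishes: {ab, (xz·yt)/(xt·yz)}_{0,1} = 0. -/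
/-- The fraction field Q(P) of the swapping ring Z(P). -/
abbrev SwapField (K : Type) [Field K] (ι : Type) : Type := FractionRing (SwapRing K ι)

/-- The image of the generator xy in Q(P). -/
noncomputable def genQ {K : Type} [Field K] {ι : Type} (x y : ι) : SwapField K ι :=
  algebraMap (SwapRing K ι) (SwapField K ι) (gen x y)

set_option maxHeartbeats 1000000 in
/-- For any generator ab and any cross fraction (xz/xt)·(yt/yz) ∈ Q(P), the
(0,1)-swapping bracket vanishes: {ab, (xz·yt)/(xt·yz)}_{0,1} = 0. -/
theorem swapping_bracket01_cross_fraction (K : Type) [Field K] [CharZero K]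
    (ι : Type) [Fintype ι] (pos : ι → ℝ) (hpos : Function.Injective pos)
    (B : SwapField K ι → SwapField K ι → SwapField K ι)
    (hal : ∀ x y z, B (x + y) z = B x z + B y z)
    (har : ∀ x y z, B x (y + z) = B x y + B x z)
    (hll : ∀ x y z, B (x * y) z = x * B y z + B x z * y)
    (hlr : ∀ x y z, B x (y * z) = y * B x z + B x y * z)
    (hgen : ∀ r x s y : ι, B (genQ r x) (genQ s y)
        = Jlink (pos r) (pos x) (pos s) (pos y) • (genQ r x * genQ s y))
    (a b x y z t : ι) (hxt : x ≠ t) (hyz : y ≠ z) :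
    B (genQ a b) ((genQ x z * genQ y t) / (genQ x t * genQ y z)) = 0 := by
  classical
  set Φ : ℚ →+* SwapField K ι :=
    (algebraMap (SwapRing K ι) (SwapField K ι)).comp
      ((MvPolynomial.C : K →+* SwapRing K ι).comp (Rat.castHom K)) with hΦ
  have hone : ∀ q : ℚ, q • (1 : SwapRing K ι) = MvPolynomial.C (q : K) := by
    intro q
    ext m
    rw [MvPolynomial.coeff_smul, MvPolynomial.coeff_one, MvPolynomial.coeff_C]
    split_ifs <;> simp [Rat.smul_def]
  have hsmul : ∀ (q : ℚ) (u : SwapField K ι), q • u = Φ q * u := by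
    intro q u
    rw [← OreLocalization.smul_one_smul q u, hone, Algebra.smul_def, hΦ]
    rfl
  have hB1 : B (genQ a b) (1 : SwapField K ι) = 0 := by
    have h := hlr (genQ a b) 1 1
    simp only [mul_one, one_mul] at h
    exact (left_eq_add.mp h)
  have hgenne : ∀ (u v : ι), u ≠ v → genQ (K := K) u v ≠ 0 := by
    intro u v huv h
    rw [genQ, gen, dif_neg huv] at h
    have h2 := (map_eq_zero_iff _
      (IsFractionRing.injective (SwapRing K ι) (SwapField K ι))).mp h
    exact MvPolynomial.X_ne_zero _ h2
  set g := genQ (K := K) a b with hg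
  set p : SwapField K ι := genQ x z * genQ y t with hp
  set c : SwapField K ι := genQ x t * genQ y z with hc
  have hcne : c ≠ 0 := mul_ne_zero (hgenne x t hxt) (hgenne y z hyz)
  set J1 := Jlink (pos a) (pos b) (pos x) (pos z) with hJ1
  set J2 := Jlink (pos a) (pos b) (pos y) (pos t) with hJ2
  set J3 := Jlink (pos a) (pos b) (pos x) (pos t) with hJ3
  set J4 := Jlink (pos a) (pos b) (pos y) (pos z) with hJ4
  have key : J1 + J2 = J3 + J4 := by
    rw [hJ1, hJ2, hJ3, hJ4]
    unfold Jlink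
    ring
  have keyΦ : Φ J1 + Φ J2 = Φ J3 + Φ J4 := by
    rw [← map_add, ← map_add, key]
  have hBp : B g p = (Φ J1 + Φ J2) * (g * p) := by
    rw [hp, hlr, hgen, hgen, ← hJ1, ← hJ2, hsmul, hsmul]
    ring
  have hBc : B g c = (Φ J3 + Φ J4) * (g * c) := by
    rw [hc, hlr, hgen, hgen, ← hJ3, ← hJ4, hsmul, hsmul]
    ring
  have h1 : c * B g c⁻¹ + B g c * c⁻¹ = 0 := by
    rw [← hlr, mul_inv_cancel₀ hcne, hB1]
  have hBinv : B g c⁻¹ = -((Φ J3 + Φ J4) * (g * c⁻¹)) := by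
    apply mul_left_cancel₀ hcne
    have h2 : c * B g c⁻¹ = -(B g c * c⁻¹) := by linear_combination h1
    rw [h2, hBc]
    ring
  rw [div_eq_mul_inv, hlr, hBinv, hBp]
  linear_combination (g * p * c⁻¹) * keyΦ
end

section
/- Any two elements of the subring B(P) of Q(P) generated by cross fractions have vanishing (0,1)-swapping bracket: {μ, ν}_{0,1} = 0 for all μ, ν ∈ B(P). -/
/-- The subring B(P) of Q(P) generated by all cross fractions (xz/xt)·(yt/yz). -/
noncomputable def crossSubring (K : Type) [Field K] [CharZero K] (ι : Type) :
    Subring (SwapField K ι) :=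
  Subring.closure {q | ∃ x y z t : ι, x ≠ t ∧ y ≠ z ∧
    q = (genQ x z * genQ y t) / (genQ x t * genQ y z)}

/-- The key combinatorial identity on linking numbers. -/
lemma Jlink_id (r x a b c d : ℝ) :
    Jlink r x a c + Jlink r x b d - Jlink r x a d - Jlink r x b c = 0 := by
  unfold Jlink; ring

/-- genQ of a pair of distinct points is nonzero. -/
lemma genQ_ne {K : Type} [Field K] {ι : Type} {x y : ι} (h : x ≠ y) :
    (genQ x y : SwapField K ι) ≠ 0 := by
  unfold genQ gen
  rw [dif_neg h]
  exact fun hc => MvPolynomial.X_ne_zero _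
    ((map_eq_zero_iff _ (IsFractionRing.injective (SwapRing K ι) (SwapField K ι))).mp hc)

/-- genQ of a repeated point is zero. -/
lemma genQ_eq_zero {K : Type} [Field K] {ι : Type} {x : ι} :
    (genQ x x : SwapField K ι) = 0 := by
  unfold genQ gen; rw [dif_pos rfl, map_zero]

/-- The ℚ-scalar action on the swapping field is multiplication by the image of ℚ. -/
lemma swap_smul_def (K : Type) [Field K] [CharZero K] (ι : Type) (c : ℚ)
    (x : SwapField K ι) : c • x = (algebraMap ℚ (SwapField K ι) c) * x := by
  rw [← algebraMap_smul (SwapRing K ι) c x,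
    ← algebraMap_smul (SwapField K ι) (algebraMap ℚ (SwapRing K ι) c) x,
    smul_eq_mul, ← IsScalarTower.algebraMap_apply]

set_option maxHeartbeats 1000000 in
/-- Any two elements of the subring B(P) generated by cross fractions have vanishing
(0,1)-swapping bracket. -/
theorem swapping_bracket01_vanishes_on_crossSubring (K : Type) [Field K] [CharZero K]
    (ι : Type) [Fintype ι] (pos : ι → ℝ) (hpos : Function.Injective pos)
    (B : SwapField K ι → SwapField K ι → SwapField K ι)
    (hal : ∀ x y z, B (x + y) z = B x z + B y z)
    (har : ∀ x y z, B x (y + z) = B x y + B x z)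
    (hll : ∀ x y z, B (x * y) z = x * B y z + B x z * y)
    (hlr : ∀ x y z, B x (y * z) = y * B x z + B x y * z)
    (hgen : ∀ r x s y : ι, B (genQ r x) (genQ s y)
        = Jlink (pos r) (pos x) (pos s) (pos y) • (genQ r x * genQ s y)) :
    ∀ μ ∈ crossSubring K ι, ∀ ν ∈ crossSubring K ι, B μ ν = 0 := by
  have hsmul : ∀ (c : ℚ) (x : SwapField K ι), c • x = (algebraMap ℚ (SwapField K ι) c) * x := swap_smul_def K ι
  -- basic consequences of bilinearity
  have h0l : ∀ z, B 0 z = 0 := by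
    intro z
    have := hal 0 0 z
    rw [zero_add] at this
    exact (right_eq_add.mp this)
  have h0r : ∀ z, B z 0 = 0 := by
    intro z
    have := har z 0 0
    rw [zero_add] at this
    exact (right_eq_add.mp this)
  have h1l : ∀ z, B 1 z = 0 := by
    intro z
    have := hll 1 1 z
    rw [one_mul, one_mul, mul_one] at this
    exact (right_eq_add.mp this)
  have h1r : ∀ z, B z 1 = 0 := by
    intro z
    have := hlr z 1 1
    rw [one_mul, one_mul, mul_one] at this
    exact (right_eq_add.mp this)
  have hnegl : ∀ x z, B (-x) z = - B x z := by
    intro x z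
    have := hal x (-x) z
    rw [add_neg_cancel, h0l] at this
    exact eq_neg_of_add_eq_zero_right this.symm
  have hnegr : ∀ x z, B z (-x) = - B z x := by
    intro x z
    have := har z x (-x)
    rw [add_neg_cancel, h0r] at this
    exact eq_neg_of_add_eq_zero_right this.symm
  -- Step 1: the bracket of any generator with any element of the subring vanishes.
  have step1 : ∀ r x : ι, ∀ ν ∈ crossSubring K ι, B (genQ r x) ν = 0 := by
    intro r x ν hν
    set g : SwapField K ι := genQ r x with hg
    -- scaled Leibniz rules for the fixed left argument g
    have hmulc : ∀ (u v : SwapField K ι) (c d : ℚ), B g u = c • (g * u) → B g v = d • (g * v) →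
        B g (u * v) = (c + d) • (g * (u * v)) := by
      intro u v c d hu hv
      rw [hlr, hu, hv, hsmul, hsmul, hsmul, map_add]
      ring
    have hinvc : ∀ (v : SwapField K ι) (d : ℚ), v ≠ 0 → B g v = d • (g * v) →
        B g v⁻¹ = (-d) • (g * v⁻¹) := by
      intro v d hvne hv
      have hvw : v * v⁻¹ = 1 := mul_inv_cancel₀ hvne
      have h0 : B g (v * v⁻¹) = 0 := by rw [hvw]; exact h1r g
      rw [hlr, hv, hsmul] at h0
      rw [hsmul, map_neg]
      linear_combination v⁻¹ * h0 -
        (B g v⁻¹ + (algebraMap ℚ (SwapField K ι) d) * g * v⁻¹) * hvw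
    -- now induct over the closure
    refine Subring.closure_induction ?_ (h0r g) (h1r g) ?_ ?_ ?_ hν
    · rintro q ⟨a, b, c, d, had, hbc, rfl⟩
      by_cases hac : a = c
      · subst hac; rw [genQ_eq_zero, zero_mul, zero_div]; exact h0r g
      by_cases hbd : b = d
      · subst hbd; rw [genQ_eq_zero, mul_zero, zero_div]; exact h0r g
      have hA := hgen r x a c
      have hB := hgen r x b d
      have hC := hgen r x a d
      have hD := hgen r x b c
      have hAB := hmulc _ _ _ _ hA hB
      have hCD := hmulc _ _ _ _ hC hD
      have hCDne : genQ a d * genQ b c ≠ (0 : SwapField K ι) :=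
        mul_ne_zero (genQ_ne had) (genQ_ne hbc)
      have hInv := hinvc _ _ hCDne hCD
      have hfin := hmulc _ _ _ _ hAB hInv
      rw [div_eq_mul_inv, hfin]
      have hz : Jlink (pos r) (pos x) (pos a) (pos c) + Jlink (pos r) (pos x) (pos b) (pos d) +
          -(Jlink (pos r) (pos x) (pos a) (pos d) + Jlink (pos r) (pos x) (pos b) (pos c))
          = 0 := by
        have := Jlink_id (pos r) (pos x) (pos a) (pos b) (pos c) (pos d)
        linarith
      rw [hz, hsmul, map_zero, zero_mul]
    · intro u v _ _ hu hv
      rw [har, hu, hv, add_zero]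
    · intro u _ hu
      rw [hnegr, hu, neg_zero]
    · intro u v _ _ hu hv
      rw [hlr, hu, hv, mul_zero, zero_mul, add_zero]
  -- Step 2: the bracket of any element of the subring with any element vanishes.
  intro μ hμ ν hν
  have hgν : ∀ r x : ι, B (genQ r x) ν = 0 := fun r x => step1 r x ν hν
  have hmul0 : ∀ u v : SwapField K ι, B u ν = 0 → B v ν = 0 → B (u * v) ν = 0 := by
    intro u v hu hv
    rw [hll, hu, hv, mul_zero, zero_mul, add_zero]
  have hinv0 : ∀ v : SwapField K ι, B v ν = 0 → B v⁻¹ ν = 0 := by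
    intro v hv
    by_cases hvne : v = 0
    · rw [hvne, inv_zero]; exact h0l ν
    · have h0 : B (v * v⁻¹) ν = 0 := by rw [mul_inv_cancel₀ hvne]; exact h1l ν
      rw [hll, hv, zero_mul, add_zero] at h0
      rcases mul_eq_zero.mp h0 with h | h
      · exact absurd h hvne
      · exact h
  refine Subring.closure_induction ?_ (h0l ν) (h1l ν) ?_ ?_ ?_ hμ
  · rintro q ⟨a, b, c, d, had, hbc, rfl⟩
    rw [div_eq_mul_inv]
    exact hmul0 _ _ (hmul0 _ _ (hgν a c) (hgν b d))
      (hinv0 _ (hmul0 _ _ (hgν a d) (hgν b c)))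
  · intro u v _ _ hu hv
    rw [hal, hu, hv, add_zero]
  · intro u _ hu
    rw [hnegl, hu, neg_zero]
  · intro u v _ _ hu hv
    exact hmul0 u v hu hv
end

section
/- Let a, b and x₁,…,x_m, y₁,…,y_m be points of P and let Δ = det(x_i y_j)_{i,j=1}^m ∈ Z(P). Then under the (0,1)-swapping bracket, {ab, Δ}_{0,1} = K · ab · Δ, where K = Σ_{i=1}^m J(ab, x_i y_{σ(i)}) for any (equivalently, every) permutation σ ∈ S_m; in particular this sum is independent of σ. -/
/-- For Δ = det(xᵢyⱼ) ∈ Z(P), under the (0,1)-swapping bracket,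
{ab, Δ}_{0,1} = K · ab · Δ where K = Σᵢ J(ab, xᵢ y_{σ(i)}) for any (equivalently every)
permutation σ; in particular this sum is independent of σ. -/
theorem swapping_bracket01_det (K : Type) [Field K] [CharZero K]
    (ι : Type) [Fintype ι] (pos : ι → ℝ) (hpos : Function.Injective pos)
    (B : SwapRing K ι → SwapRing K ι → SwapRing K ι)
    (hal : ∀ x y z, B (x + y) z = B x z + B y z)
    (har : ∀ x y z, B x (y + z) = B x y + B x z)
    (hsl : ∀ (k : K) x z, B (k • x) z = k • B x z)
    (hsr : ∀ (k : K) x z, B x (k • z) = k • B x z)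
    (hll : ∀ x y z, B (x * y) z = x * B y z + B x z * y)
    (hlr : ∀ x y z, B x (y * z) = y * B x z + B x y * z)
    (hgen : ∀ r x s y : ι, B (gen r x) (gen s y)
        = Jlink (pos r) (pos x) (pos s) (pos y) • (gen r x * gen s y))
    (m : ℕ) (a b : ι) (x y : Fin m → ι) :
    (∀ σ : Equiv.Perm (Fin m),
      B (gen a b) (Matrix.det (Matrix.of fun i j => gen (x i) (y j)))
        = (∑ i, Jlink (pos a) (pos b) (pos (x i)) (pos (y (σ i))))
            • (gen a b * Matrix.det (Matrix.of fun i j => gen (x i) (y j)))) ∧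
    (∀ σ σ' : Equiv.Perm (Fin m),
      (∑ i, Jlink (pos a) (pos b) (pos (x i)) (pos (y (σ i))))
        = ∑ i, Jlink (pos a) (pos b) (pos (x i)) (pos (y (σ' i)))) := by
  classical
  set g : SwapRing K ι := gen a b with hg
  set F : ι → ℚ := fun t =>
    (1/2) * sgnq (pos a - pos b) * sgnq (pos a - pos t) * sgnq (pos t - pos b) with hF
  have hJ : ∀ s t : ι, Jlink (pos a) (pos b) (pos s) (pos t) = F t - F s := by
    intro s t; simp only [Jlink, hF]
  set C : ℚ := (∑ j, F (y j)) - ∑ i, F (x i) with hC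
  have hsum : ∀ σ : Equiv.Perm (Fin m),
      (∑ i, Jlink (pos a) (pos b) (pos (x i)) (pos (y (σ i)))) = C := by
    intro σ
    simp only [hJ, Finset.sum_sub_distrib, hC]
    congr 1
    exact Equiv.sum_comp σ fun i => F (y i)
  refine ⟨?_, fun σ σ' => (hsum σ).trans (hsum σ').symm⟩
  intro σ
  rw [hsum σ]
  -- B g as an additive monoid hom
  set T : SwapRing K ι →+ SwapRing K ι := AddMonoidHom.mk' (B g) (har g) with hT
  have hTdef : ∀ w, B g w = T w := fun _ => rfl
  have hT1 : T 1 = 0 := by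
    have h := hlr g 1 1
    rw [mul_one, one_mul, mul_one] at h
    exact left_eq_add.mp h
  -- product rule
  have key : ∀ (s : Finset (Fin m)) (p : Fin m → SwapRing K ι) (c : Fin m → ℚ),
      (∀ i ∈ s, B g (p i) = c i • (g * p i)) →
      B g (∏ i ∈ s, p i) = (∑ i ∈ s, c i) • (g * ∏ i ∈ s, p i) := by
    intro s
    induction s using Finset.induction_on with
    | empty => intro p c _; simpa [hTdef] using hT1
    | @insert j s hj ih =>
      intro p c h
      rw [Finset.prod_insert hj, Finset.sum_insert hj, hlr, ih p c (fun i hi => h i (Finset.mem_insert_of_mem hi)),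
        h j (Finset.mem_insert_self j s)]
      have e1 : p j * (g * ∏ i ∈ s, p i) = g * (p j * ∏ i ∈ s, p i) := by ring
      have e2 : (g * p j) * ∏ i ∈ s, p i = g * (p j * ∏ i ∈ s, p i) := by ring
      rw [mul_smul_comm, smul_mul_assoc, e1, e2, add_smul, add_comm]
  -- each permutation term
  have hterm : ∀ τ : Equiv.Perm (Fin m),
      B g (∏ i, gen (x (τ i)) (y i) : SwapRing K ι)
        = C • (g * ∏ i, gen (x (τ i)) (y i)) := by
    intro τ
    have := key Finset.univ (fun i => gen (x (τ i)) (y i))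
      (fun i => Jlink (pos a) (pos b) (pos (x (τ i))) (pos (y i)))
      (fun i _ => hgen a b (x (τ i)) (y i))
    rw [this]
    congr 1
    simp only [hJ, Finset.sum_sub_distrib, hC]
    congr 1
    exact Equiv.sum_comp τ fun i => F (x i)
  -- integer-cast constants killed by B g
  have hint : ∀ n : ℤ, B g ((n : SwapRing K ι)) = 0 := by
    intro n
    rw [show ((n : SwapRing K ι)) = n • (1 : SwapRing K ι) by simp, hTdef, map_zsmul, hT1,
      smul_zero]
  rw [Matrix.det_apply']
  simp only [Matrix.of_apply]
  rw [hTdef, map_sum]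
  have hstep : ∀ τ : Equiv.Perm (Fin m),
      T (((Equiv.Perm.sign τ : ℤ) : SwapRing K ι) * ∏ i, gen (x (τ i)) (y i))
        = C • (g * (((Equiv.Perm.sign τ : ℤ) : SwapRing K ι) * ∏ i, gen (x (τ i)) (y i))) := by
    intro τ
    rw [← hTdef, hlr, hint, zero_mul, add_zero, hterm τ, mul_smul_comm]
    congr 1
    ring
  calc (∑ τ : Equiv.Perm (Fin m),
        T (((Equiv.Perm.sign τ : ℤ) : SwapRing K ι) * ∏ i, gen (x (τ i)) (y i)))
      = ∑ τ : Equiv.Perm (Fin m),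
        C • (g * (((Equiv.Perm.sign τ : ℤ) : SwapRing K ι) * ∏ i, gen (x (τ i)) (y i))) := by
        exact Finset.sum_congr rfl fun τ _ => hstep τ
    _ = C • (g * ∑ τ : Equiv.Perm (Fin m),
        (((Equiv.Perm.sign τ : ℤ) : SwapRing K ι) * ∏ i, gen (x (τ i)) (y i))) := by
        rw [Finset.mul_sum, Finset.smul_sum]
end

section
/- For any permutation σ in S_m and any transposition (k l), the sums K(σ) = Σ_{i=1}^m J(ab, x_i y_{σ(i)}) satisfy K((k l)∘σ) = K(σ); hence K(σ) is constant on S_m. -/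
/-- The sign function: -1 if a < 0, 0 if a = 0, 1 if a > 0. -/
noncomputable def sgn (a : ℝ) : ℝ := if a < 0 then -1 else if a = 0 then 0 else 1

/-- The linking number J(rx, sy) of two ordered pairs of points on the circle minus a
point, identified with real numbers. -/
noncomputable def linking (r x s y : ℝ) : ℝ :=
  (1/2) * sgn (r-x) * sgn (r-y) * sgn (y-x) - (1/2) * sgn (r-x) * sgn (r-s) * sgn (s-x)

lemma linking_sum_eq (m : ℕ) (a b : ℝ) (x y : Fin m → ℝ) (σ : Equiv.Perm (Fin m)) :
    (∑ i, linking a b (x i) (y (σ i))) = ∑ i, linking a b (x i) (y i) := by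
  simp only [linking, Finset.sum_sub_distrib]
  congr 1
  exact Equiv.sum_comp σ (fun j => (1/2) * sgn (a-b) * sgn (a - y j) * sgn (y j - b))

/-- For any permutation σ and any transposition (k l), the sums
K(σ) = Σᵢ J(ab, xᵢ y_{σ(i)}) satisfy K((k l)∘σ) = K(σ); hence K(σ) is constant on S_m. -/
theorem linking_sum_perm_invariant (m : ℕ) (a b : ℝ) (x y : Fin m → ℝ) :
    (∀ (σ : Equiv.Perm (Fin m)) (k l : Fin m),
        (∑ i, linking a b (x i) (y ((Equiv.swap k l * σ) i)))
          = ∑ i, linking a b (x i) (y (σ i))) ∧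
    (∀ σ σ' : Equiv.Perm (Fin m),
        (∑ i, linking a b (x i) (y (σ i))) = ∑ i, linking a b (x i) (y (σ' i))) := by
  constructor
  · intro σ k l
    rw [linking_sum_eq m a b x y (Equiv.swap k l * σ), linking_sum_eq m a b x y σ]
  · intro σ σ'
    rw [linking_sum_eq m a b x y σ, linking_sum_eq m a b x y σ']
end

section
/- The ideal R_n(P) of Z(P) generated by all (n+1)×(n+1) determinants Δ((x₁,…,x_{n+1}),(y₁,…,y_{n+1})) = det(x_i y_j) is a Poisson ideal of Z(P) with respect to the (α,β)-swapping bracket: {Z(P), R_n(P)}_{α,β} ⊆ R_n(P). -/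
/-- The ideal R_n(P) generated by all (n+1)×(n+1) determinants det(xᵢyⱼ). -/
noncomputable def rankIdeal (K : Type) [Field K] (ι : Type) (n : ℕ) : Ideal (SwapRing K ι) :=
  Ideal.span {D | ∃ x y : Fin (n+1) → ι,
    D = Matrix.det (Matrix.of fun i j => gen (x i) (y j))}

lemma rat_smul_eq {K : Type} [Field K] [CharZero K] {ι : Type} (q : ℚ) (p : SwapRing K ι) :
    q • p = MvPolynomial.C (q : K) * p := by
  rw [← MvPolynomial.smul_eq_C_mul]
  ext m
  rw [MvPolynomial.coeff_smul, MvPolynomial.coeff_smul, Rat.smul_def, smul_eq_mul]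

section derivdet
variable {R : Type*} [CommRing R]

lemma d_one (d : R →+ R) (hl : ∀ a b, d (a * b) = a * d b + d a * b) : d 1 = 0 := by
  have h := hl 1 1
  simp only [mul_one, one_mul] at h
  exact (left_eq_add.mp h)

lemma deriv_prod (d : R →+ R) (hl : ∀ a b, d (a * b) = a * d b + d a * b)
    {κ : Type*} [DecidableEq κ] (s : Finset κ) (f : κ → R) :
    d (∏ i ∈ s, f i) = ∑ i ∈ s, (∏ k ∈ s.erase i, f k) * d (f i) := by
  induction s using Finset.induction_on with
  | empty => simpa using d_one d hl
  | @insert a s ha ih =>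
    rw [Finset.prod_insert ha, hl, ih, Finset.sum_insert ha, Finset.erase_insert ha,
      Finset.mul_sum]
    rw [add_comm]
    congr 1
    · exact mul_comm _ _
    · refine Finset.sum_congr rfl fun i hi => ?_
      have hne : a ≠ i := by rintro rfl; exact ha hi
      rw [Finset.erase_insert_of_ne hne,
        Finset.prod_insert (fun h => ha (Finset.mem_of_mem_erase h))]
      ring

lemma deriv_det (d : R →+ R) (hl : ∀ a b, d (a * b) = a * d b + d a * b)
    {m : ℕ} (M : Matrix (Fin m) (Fin m) R) :
    d M.det = ∑ j, (M.updateCol j fun i => d (M i j)).det := by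
  rw [Matrix.det_apply, map_sum]
  have lhs : ∀ σ : Equiv.Perm (Fin m),
      d (Equiv.Perm.sign σ • ∏ i, M (σ i) i)
        = ∑ j, Equiv.Perm.sign σ • ((∏ k ∈ Finset.univ.erase j, M (σ k) k) * d (M (σ j) j)) := by
    intro σ
    rw [Units.smul_def, map_zsmul, deriv_prod d hl, Finset.smul_sum]
    simp only [Units.smul_def]
  rw [Finset.sum_congr rfl fun σ _ => lhs σ, Finset.sum_comm]
  refine Finset.sum_congr rfl fun j _ => ?_
  rw [Matrix.det_apply]
  refine Finset.sum_congr rfl fun σ _ => ?_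
  congr 1
  have : ∀ i : Fin m, (M.updateCol j fun k => d (M k j)) (σ i) i
      = if i = j then d (M (σ i) j) else M (σ i) i := by
    intro i
    rw [Matrix.updateCol_apply]
  rw [Finset.prod_congr rfl fun i _ => this i, ← Finset.mul_prod_erase _ _ (Finset.mem_univ j),
    if_pos rfl]
  rw [Finset.prod_congr rfl (fun i hi => if_neg (Finset.ne_of_mem_erase hi))]
  ring

lemma det_updateCol_eq_sum {m : ℕ} (M : Matrix (Fin m) (Fin m) R)
    (j : Fin m) (u : Fin m → R) :
    (M.updateCol j u).det = ∑ i, M.adjugate j i * u i := by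
  rw [← Matrix.cramer_apply, Matrix.cramer_eq_adjugate_mulVec]
  rfl

lemma det_updateRow_eq_sum {m : ℕ} (M : Matrix (Fin m) (Fin m) R)
    (i : Fin m) (v : Fin m → R) :
    (M.updateRow i v).det = ∑ j, M.adjugate j i * v j := by
  have h : M.updateRow i v = (M.transpose.updateCol i v).transpose := by
    rw [← Matrix.updateRow_transpose, Matrix.transpose_transpose]
  rw [h, Matrix.det_transpose, det_updateCol_eq_sum]
  refine Finset.sum_congr rfl fun j _ => ?_
  rw [← Matrix.adjugate_transpose]
  rfl

lemma deriv_det_adj (d : R →+ R) (hl : ∀ a b, d (a * b) = a * d b + d a * b)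
    {m : ℕ} (M : Matrix (Fin m) (Fin m) R) :
    d M.det = ∑ j, ∑ i, M.adjugate j i * d (M i j) := by
  rw [deriv_det d hl]
  exact Finset.sum_congr rfl fun j _ => det_updateCol_eq_sum M j _

end derivdet

open MvPolynomial in
lemma swap_core (K : Type) [Field K] [CharZero K] (α β : K) (n : ℕ)
    (ι : Type) (pos : ι → ℝ)
    (B : SwapRing K ι → SwapRing K ι → SwapRing K ι)
    (har : ∀ x y z, B x (y + z) = B x y + B x z)
    (hlr : ∀ x y z, B x (y * z) = y * B x z + B x y * z)
    (hgen : ∀ r x s y : ι, B (gen r x) (gen s y)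
        = Jlink (pos r) (pos x) (pos s) (pos y)
            • (α • (gen r y * gen s x) + β • (gen r x * gen s y)))
    (r x₀ : ι) (x y : Fin (n+1) → ι) :
    B (gen r x₀) (Matrix.det (Matrix.of fun i j => gen (x i) (y j))) ∈ rankIdeal K ι n := by
  classical
  set M : Matrix (Fin (n+1)) (Fin (n+1)) (SwapRing K ι) :=
    Matrix.of fun i j => gen (x i) (y j) with hMdef
  have hz : B (gen r x₀) 0 = 0 := by
    have h := har (gen r x₀) 0 0
    rw [add_zero] at h
    exact (left_eq_add.mp h)
  let d : SwapRing K ι →+ SwapRing K ι :=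
    { toFun := B (gen r x₀), map_zero' := hz, map_add' := har (gen r x₀) }
  have hl : ∀ a b, d (a * b) = a * d b + d a * b := hlr (gen r x₀)
  show d M.det ∈ rankIdeal K ι n
  rw [deriv_det_adj d hl]
  set w : ι → K := fun t =>
    (((1/2 : ℚ) * sgnq (pos r - pos x₀) * sgnq (pos r - pos t) * sgnq (pos t - pos x₀) : ℚ) : K)
    with hw
  set P : Fin (n+1) → Fin (n+1) → SwapRing K ι := fun i j =>
    C (w (y j)) * C α * gen r (y j) * (M.adjugate j i * gen (x i) x₀)
      + C (w (y j)) * C β * gen r x₀ * (M.adjugate j i * M i j) with hP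
  set Q : Fin (n+1) → Fin (n+1) → SwapRing K ι := fun i j =>
    C (w (x i)) * C α * gen (x i) x₀ * (M.adjugate j i * gen r (y j))
      + C (w (x i)) * C β * gen r x₀ * (M.adjugate j i * M i j) with hQ
  have key : ∀ i j, M.adjugate j i * d (M i j) = P i j - Q i j := by
    intro i j
    have hMij : M i j = gen (x i) (y j) := rfl
    have hd : d (M i j) = B (gen r x₀) (gen (x i) (y j)) := by rw [hMij]; rfl
    rw [hd, hgen, Jlink, rat_smul_eq, smul_eq_C_mul, smul_eq_C_mul, hP, hQ, hw]
    push_cast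
    rw [map_sub]
    rw [hMij]
    ring
  have split : (∑ j, ∑ i, M.adjugate j i * d (M i j))
      = (∑ j, ∑ i, P i j) - (∑ i, ∑ j, Q i j) := by
    simp only [key, Finset.sum_sub_distrib]
    rw [Finset.sum_comm (f := fun j i => Q i j)]
  rw [split]
  have hMmem : M.det ∈ rankIdeal K ι n := Ideal.subset_span ⟨x, y, rfl⟩
  have hself_col : ∀ j, (∑ i, M.adjugate j i * M i j) = M.det := by
    intro j
    rw [← det_updateCol_eq_sum, Matrix.updateCol_eq_self]
  have hself_row : ∀ i, (∑ j, M.adjugate j i * M i j) = M.det := by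
    intro i
    rw [← det_updateRow_eq_sum, Matrix.updateRow_eq_self]
  refine sub_mem ?_ ?_
  · refine Ideal.sum_mem _ fun j _ => ?_
    have hsum : (∑ i, P i j)
        = C (w (y j)) * C α * gen r (y j) * (M.updateCol j fun i => gen (x i) x₀).det
          + C (w (y j)) * C β * gen r x₀ * M.det := by
      rw [det_updateCol_eq_sum, ← hself_col j, Finset.mul_sum, Finset.mul_sum,
        ← Finset.sum_add_distrib]
    rw [hsum]
    have hcolgen : (M.updateCol j fun i => gen (x i) x₀)
        = Matrix.of fun i j' => gen (x i) (Function.update y j x₀ j') := by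
      ext i j'
      rw [Matrix.updateCol_apply, Matrix.of_apply, Function.update_apply]
      split <;> rfl
    refine add_mem (Ideal.mul_mem_left _ _ ?_) (Ideal.mul_mem_left _ _ hMmem)
    exact Ideal.subset_span ⟨x, Function.update y j x₀, by rw [hcolgen]⟩
  · refine Ideal.sum_mem _ fun i _ => ?_
    have hsum : (∑ j, Q i j)
        = C (w (x i)) * C α * gen (x i) x₀ * (M.updateRow i fun j => gen r (y j)).det
          + C (w (x i)) * C β * gen r x₀ * M.det := by
      rw [det_updateRow_eq_sum, ← hself_row i, Finset.mul_sum, Finset.mul_sum,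
        ← Finset.sum_add_distrib]
    rw [hsum]
    have hrowgen : (M.updateRow i fun j => gen r (y j))
        = Matrix.of fun i' j => gen (Function.update x i r i') (y j) := by
      ext i' j
      rw [Matrix.updateRow_apply, Matrix.of_apply, Function.update_apply]
      split <;> rfl
    refine add_mem (Ideal.mul_mem_left _ _ ?_) (Ideal.mul_mem_left _ _ hMmem)
    exact Ideal.subset_span ⟨Function.update x i r, y, by rw [hrowgen]⟩


/-- R_n(P) is a Poisson ideal of Z(P) with respect to the (α,β)-swapping bracket:
{Z(P), R_n(P)}_{α,β} ⊆ R_n(P). -/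
theorem rankIdeal_poisson (K : Type) [Field K] [CharZero K] (α β : K) (n : ℕ) (hn : 2 ≤ n)
    (ι : Type) [Fintype ι] (pos : ι → ℝ) (hpos : Function.Injective pos)
    (B : SwapRing K ι → SwapRing K ι → SwapRing K ι)
    (hal : ∀ x y z, B (x + y) z = B x z + B y z)
    (har : ∀ x y z, B x (y + z) = B x y + B x z)
    (hsl : ∀ (k : K) x z, B (k • x) z = k • B x z)
    (hsr : ∀ (k : K) x z, B x (k • z) = k • B x z)
    (hll : ∀ x y z, B (x * y) z = x * B y z + B x z * y)
    (hlr : ∀ x y z, B x (y * z) = y * B x z + B x y * z)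
    (hgen : ∀ r x s y : ι, B (gen r x) (gen s y)
        = Jlink (pos r) (pos x) (pos s) (pos y)
            • (α • (gen r y * gen s x) + β • (gen r x * gen s y))) :
    ∀ f g : SwapRing K ι, g ∈ rankIdeal K ι n → B f g ∈ rankIdeal K ι n := by
  classical
  intro f g hg
  -- B f D ∈ ideal for every determinant generator D
  have key : ∀ (f : SwapRing K ι) (Dx Dy : Fin (n+1) → ι),
      B f (Matrix.det (Matrix.of fun i j => gen (Dx i) (Dy j))) ∈ rankIdeal K ι n := by
    intro f Dx Dy
    set D : SwapRing K ι := Matrix.det (Matrix.of fun i j => gen (Dx i) (Dy j)) with hD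
    induction f using MvPolynomial.induction_on with
    | C k =>
      have h1 : B (1 : SwapRing K ι) D = 0 := by
        have h := hll 1 1 D
        rw [one_mul, one_mul, mul_one] at h
        exact (left_eq_add.mp h)
      have hC : (MvPolynomial.C k : SwapRing K ι) = k • (1 : SwapRing K ι) := by
        rw [MvPolynomial.smul_eq_C_mul, mul_one]
      rw [hC, hsl, h1, smul_zero]
      exact zero_mem _
    | add p q hp hq =>
      rw [hal]
      exact add_mem hp hq
    | mul_X p v hp =>
      rw [hll]
      refine add_mem (Ideal.mul_mem_left _ _ ?_) (Ideal.mul_mem_right _ _ hp)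
      have hX : (MvPolynomial.X v : SwapRing K ι) = gen v.1.1 v.1.2 := by
        rw [gen, dif_neg v.2]
      rw [hX]
      exact swap_core K α β n ι pos B har hlr hgen v.1.1 v.1.2 Dx Dy
  refine Submodule.span_induction (p := fun g _ => B f g ∈ rankIdeal K ι n) ?_ ?_ ?_ ?_ hg
  · rintro D ⟨Dx, Dy, rfl⟩
    exact key f Dx Dy
  · show B f 0 ∈ rankIdeal K ι n
    have h := har f 0 0
    rw [add_zero] at h
    rw [(left_eq_add.mp h)]
    exact zero_mem _
  · intro a b _ _ ha hb
    rw [har]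
    exact add_mem ha hb
  · intro a gg hgg hmem
    have hgg' : gg ∈ rankIdeal K ι n := hgg
    show B f (a • gg) ∈ rankIdeal K ι n
    rw [smul_eq_mul, hlr]
    exact add_mem (Ideal.mul_mem_left _ _ hmem) (Ideal.mul_mem_left _ (B f a) hgg')
end

section
/- In the rank n swapping ring, the (n×n)-determinant ratio E(x₁,…,x_{n−1}| t, y) := Δ((x₁,…,x_{n−1},t),(v₁,…,v_n)) / Δ((x₁,…,x_{n−1},y),(v₁,…,v_n)) ∈ Q_n(P) is independent of the choice of mutually distinct points v₁,…,v_n ∈ P (provided the denominators are nonzero). -/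
set_option synthInstance.maxHeartbeats 1000000
set_option maxHeartbeats 4000000

/-- The rank n swapping ring Z_n(P) = Z(P)/R_n(P). -/
abbrev RankRing (K : Type) [Field K] (ι : Type) (n : ℕ) : Type :=
  SwapRing K ι ⧸ rankIdeal K ι n

/-- The fraction field Q_n(P) of the rank n swapping ring. -/
abbrev RankField (K : Type) [Field K] (ι : Type) (n : ℕ) : Type :=
  FractionRing (RankRing K ι n)

/-- The image of the generator xy in Q_n(P). -/
noncomputable def genR (K : Type) [Field K] (ι : Type) (n : ℕ) (x y : ι) :
    RankField K ι n :=
  algebraMap (RankRing K ι n) (RankField K ι n) (Ideal.Quotient.mk _ (gen x y))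

/-- The image of a scalar k ∈ K in Q_n(P). -/
noncomputable def cstR (K : Type) [Field K] (ι : Type) (n : ℕ) (k : K) :
    RankField K ι n :=
  algebraMap (RankRing K ι n) (RankField K ι n) (algebraMap K (RankRing K ι n) k)

/-- The image of a rational constant in Q_n(P). -/
noncomputable def ratR (K : Type) [Field K] [CharZero K] (ι : Type) (n : ℕ) (q : ℚ) :
    RankField K ι n :=
  cstR K ι n (q • (1 : K))

/-- In the rank n swapping ring (n = m+2 ≥ 2), the (n×n)-determinant ratio
E(x₁,…,x_{n−1}| t, y) = Δ((x₁,…,x_{n−1},t),(v₁,…,v_n)) / Δ((x₁,…,x_{n−1},y),(v₁,…,v_n))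
in Q_n(P) is independent of the choice of mutually distinct v₁,…,v_n ∈ P
(provided the denominators are nonzero). -/
theorem determinant_ratio_well_defined (K : Type) [Field K] [CharZero K]
    (m : ℕ) (ι : Type) [Fintype ι] (pos : ι → ℝ) (hpos : Function.Injective pos)
    [IsDomain (RankRing K ι (m + 2))]
    (xs : Fin (m + 1) → ι) (t y : ι)
    (hxy : Function.Injective (Fin.snoc xs y : Fin (m + 2) → ι))
    (v v' : Fin (m + 2) → ι) (hv : Function.Injective v) (hv' : Function.Injective v')
    (hden : Matrix.det (Matrix.of fun s u =>
        genR K ι (m + 2) ((Fin.snoc xs y : Fin (m + 2) → ι) s) (v u)) ≠ 0)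
    (hden' : Matrix.det (Matrix.of fun s u =>
        genR K ι (m + 2) ((Fin.snoc xs y : Fin (m + 2) → ι) s) (v' u)) ≠ 0) :
    Matrix.det (Matrix.of fun s u => genR K ι (m + 2) ((Fin.snoc xs t : Fin (m + 2) → ι) s) (v u))
        / Matrix.det (Matrix.of fun s u => genR K ι (m + 2) ((Fin.snoc xs y : Fin (m + 2) → ι) s) (v u))
      = Matrix.det (Matrix.of fun s u => genR K ι (m + 2) ((Fin.snoc xs t : Fin (m + 2) → ι) s) (v' u))
          / Matrix.det (Matrix.of fun s u => genR K ι (m + 2) ((Fin.snoc xs y : Fin (m + 2) → ι) s) (v' u)) := by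
  classical
  -- all (n+1) × (n+1) minors vanish in the rank ring
  have hminor : ∀ (a b : Fin (m+3) → ι),
      Matrix.det (Matrix.of fun i j => genR K ι (m+2) (a i) (b j)) = 0 := by
    intro a b
    have hmem : Matrix.det (Matrix.of fun i j => (gen (a i) (b j) : SwapRing K ι))
        ∈ rankIdeal K ι (m+2) := Ideal.subset_span ⟨a, b, rfl⟩
    have hdet := RingHom.map_det
      (((algebraMap (RankRing K ι (m+2)) (RankField K ι (m+2))) :
          RankRing K ι (m+2) →+* RankField K ι (m+2)).comp
        (Ideal.Quotient.mk (rankIdeal K ι (m+2))))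
      (Matrix.of fun i j => (gen (a i) (b j) : SwapRing K ι))
    have hmap : (Matrix.of fun i j => (gen (a i) (b j) : SwapRing K ι)).map
        (((algebraMap (RankRing K ι (m+2)) (RankField K ι (m+2))) :
            RankRing K ι (m+2) →+* RankField K ι (m+2)).comp
          (Ideal.Quotient.mk (rankIdeal K ι (m+2))))
        = Matrix.of fun i j => genR K ι (m+2) (a i) (b j) := by
      ext i j
      rfl
    rw [RingHom.mapMatrix_apply] at hdet
    rw [← hmap, ← hdet, RingHom.comp_apply, Ideal.Quotient.eq_zero_iff_mem.mpr hmem, map_zero]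
  set σ : Fin (m+2) → ι := (Fin.snoc xs y : Fin (m+2) → ι) with hσ
  set ρ : Fin (m+3) → ι := Fin.snoc σ t with hρ
  set N : Matrix (Fin (m+2)) (Fin (m+2)) (RankField K ι (m+2)) :=
    Matrix.of fun s u => genR K ι (m+2) (σ s) (v u) with hN
  set N' : Matrix (Fin (m+2)) (Fin (m+2)) (RankField K ι (m+2)) :=
    Matrix.of fun s u => genR K ι (m+2) (σ s) (v' u) with hN'
  set D : Fin (m+2) → Matrix (Fin (m+2)) (Fin (m+2)) (RankField K ι (m+2)) :=
    fun k => Matrix.of fun s u => genR K ι (m+2) (ρ ((Fin.castSucc k).succAbove s)) (v u) with hD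
  set c : Fin (m+2) → RankField K ι (m+2) :=
    fun k => -((-1) ^ ((k:ℕ) + (m+2)) * Matrix.det (D k)) / Matrix.det N with hc
  have key : ∀ w : ι,
      genR K ι (m+2) t w = ∑ k, c k * genR K ι (m+2) (σ k) w := by
    intro w
    have h0 := hminor ρ (Fin.snoc v w)
    have hexp := Matrix.det_succ_column
      (Matrix.of fun (i j : Fin (m+3)) => genR K ι (m+2) (ρ i)
        ((Fin.snoc v w : Fin (m+3) → ι) j))
      (Fin.last (m+2))
    rw [h0, Fin.sum_univ_castSucc] at hexp
    have h0' : (∑ k : Fin (m+2), (-1 : RankField K ι (m+2)) ^ ((k:ℕ) + (m+2)) *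
          genR K ι (m+2) (σ k) w * Matrix.det (D k))
        + genR K ι (m+2) t w * Matrix.det N = 0 := by
      rw [hexp]
      congr 1
      · refine Finset.sum_congr rfl fun k _ => ?_
        have hsub : (Matrix.of fun (i j : Fin (m+3)) => genR K ι (m+2) (ρ i)
              ((Fin.snoc v w : Fin (m+3) → ι) j)).submatrix
            (Fin.castSucc k).succAbove (Fin.last (m+2)).succAbove = D k := by
          ext s u
          simp [Matrix.submatrix_apply, Fin.succAbove_last, hD]
        rw [hsub]
        simp [hρ, Fin.snoc_castSucc, Fin.snoc_last]
      · have hsub : (Matrix.of fun (i j : Fin (m+3)) => genR K ι (m+2) (ρ i)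
              ((Fin.snoc v w : Fin (m+3) → ι) j)).submatrix
            (Fin.last (m+2)).succAbove (Fin.last (m+2)).succAbove = N := by
          ext s u
          simp [Matrix.submatrix_apply, Fin.succAbove_last, hρ, Fin.snoc_castSucc,
            Fin.snoc_last, hN]
        rw [hsub]
        have heven : ((-1 : RankField K ι (m+2))) ^
            (((Fin.last (m+2)) : ℕ) + ((Fin.last (m+2)) : ℕ)) = 1 :=
          Even.neg_one_pow ⟨(m+2), by simp⟩
        simp [hρ, Fin.snoc_last, heven]
    have hcancel : genR K ι (m+2) t w * Matrix.det N
        = (∑ k, c k * genR K ι (m+2) (σ k) w) * Matrix.det N := by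
      rw [Finset.sum_mul]
      have hterm : ∀ k ∈ Finset.univ, c k * genR K ι (m+2) (σ k) w * Matrix.det N
          = -((-1 : RankField K ι (m+2)) ^ ((k:ℕ) + (m+2)) *
              genR K ι (m+2) (σ k) w * Matrix.det (D k)) := by
        intro k _
        simp only [hc]
        rw [div_mul_eq_mul_div, div_mul_eq_mul_div, div_eq_iff hden]
        ring
      rw [Finset.sum_congr rfl hterm, Finset.sum_neg_distrib]
      exact eq_neg_of_add_eq_zero_right h0'
    exact mul_right_cancel₀ hden hcancel
  have hT : (Matrix.of fun s u =>
        genR K ι (m+2) ((Fin.snoc xs t : Fin (m+2) → ι) s) (v u))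
      = N.updateRow (Fin.last (m+1)) (∑ k, c k • N k) := by
    ext s u
    rcases Fin.eq_castSucc_or_eq_last s with ⟨k, rfl⟩ | rfl
    · rw [Matrix.updateRow_ne (Fin.castSucc_lt_last k).ne]
      simp [hN, hσ, Fin.snoc_castSucc]
    · rw [Matrix.updateRow_self]
      simp only [Finset.sum_apply, Pi.smul_apply, smul_eq_mul]
      have : (Fin.snoc xs t : Fin (m+2) → ι) (Fin.last (m+1)) = t := Fin.snoc_last _ _
      rw [Matrix.of_apply, this, key (v u)]
      rfl
  have hT' : (Matrix.of fun s u =>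
        genR K ι (m+2) ((Fin.snoc xs t : Fin (m+2) → ι) s) (v' u))
      = N'.updateRow (Fin.last (m+1)) (∑ k, c k • N' k) := by
    ext s u
    rcases Fin.eq_castSucc_or_eq_last s with ⟨k, rfl⟩ | rfl
    · rw [Matrix.updateRow_ne (Fin.castSucc_lt_last k).ne]
      simp [hN', hσ, Fin.snoc_castSucc]
    · rw [Matrix.updateRow_self]
      simp only [Finset.sum_apply, Pi.smul_apply, smul_eq_mul]
      have : (Fin.snoc xs t : Fin (m+2) → ι) (Fin.last (m+1)) = t := Fin.snoc_last _ _
      rw [Matrix.of_apply, this, key (v' u)]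
      rfl
  rw [hT, hT', Matrix.det_updateRow_sum, Matrix.det_updateRow_sum, smul_eq_mul, smul_eq_mul,
    mul_div_assoc, mul_div_assoc, div_self hden, div_self hden', mul_one]
end
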